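/- Assume the Lipschitz conditions |w₀(v) − w₀(v')| ≤ l₀√(2m)·‖v − v'‖ for all v, v' ∈ ℝ^{m+1}, |w_j(a,b) − w_j(a',b')| ≤ l_j·(|a − a'| + |b − b'|) for all a, a', b, b' ∈ ℝ (j = 1,…,m), and |u₀(z) − u₀(z')| ≤ l_J·|z − z'| for all z, z' ∈ ℝ. Then for all bounded measurable ψ¹, ψ² : [0,∞) → ℝ^{m+1} (with the same initial vector v⁰) and all t ≥ 0: |(Πψ¹)₀(t) − (Πψ²)₀(t)| ≤ (l₀√(2m)/k₀ + l_J·e^{k₀ω}/(1 − e^{−k₀ω}))·sup_{s≥0}‖ψ¹(s) − ψ²(s)‖ and |(Πψ¹)_j(t) − (Πψ²)_j(t)| ≤ (2l_j/k_j)·sup_{s≥0}‖ψ¹(s) − ψ²(s)‖ for j = 1,…,m. (This is the contraction estimate for the operator Π in the proof of Theorem 3.) -/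

import Mathlib

/-- The Euclidean norm on `Fin n → ℝ`. -/
noncomputable def eNorm {n : ℕ} (v : Fin n → ℝ) : ℝ := Real.sqrt (∑ j, v j ^ 2)

/-- The operator `Π` from the proof of Theorem 3: coordinate `0` gets
`(Πψ)₀(t) = e^{−k₀t}v⁰₀ + ∫₀^t e^{−k₀(t−s)} w₀(ψ(s)) ds
  + Σ_{0 ≤ θ_i < t} e^{−k₀(t−θ_i)} u₀(ψ₀(θ_i))`,
and the coordinates `j = 1,…,m` get
`(Πψ)_j(t) = e^{−k_jt}v⁰_j + ∫₀^t e^{−k_j(t−s)} w_j(ψ₀(s), ψ_j(s)) ds`. -/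
noncomputable def PiOp (m : ℕ) (θ : ℤ → ℝ) (k : Fin (m + 1) → ℝ)
    (w₀ : (Fin (m + 1) → ℝ) → ℝ) (w : Fin (m + 1) → ℝ → ℝ → ℝ) (u₀ : ℝ → ℝ)
    (v0 : Fin (m + 1) → ℝ) (ψ : ℝ → Fin (m + 1) → ℝ) : ℝ → Fin (m + 1) → ℝ := fun t j =>
  if j = 0 then
    Real.exp (-(k 0) * t) * v0 0
      + (∫ s in (0:ℝ)..t, Real.exp (-(k 0) * (t - s)) * w₀ (ψ s))
      + ∑' i : ℤ, (if 0 ≤ θ i ∧ θ i < t then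
          Real.exp (-(k 0) * (t - θ i)) * u₀ (ψ (θ i) 0) else 0)
  else
    Real.exp (-(k j) * t) * v0 j
      + ∫ s in (0:ℝ)..t, Real.exp (-(k j) * (t - s)) * w j (ψ s 0) (ψ s j)

open MeasureTheory

lemma eNorm_nonneg' {n : ℕ} (v : Fin n → ℝ) : 0 ≤ eNorm v := Real.sqrt_nonneg _

lemma abs_le_eNorm {n : ℕ} (v : Fin n → ℝ) (j : Fin n) : |v j| ≤ eNorm v := by
  rw [← Real.sqrt_sq_eq_abs]
  exact Real.sqrt_le_sqrt (Finset.single_le_sum (f := fun i => v i ^ 2)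
    (fun i _ => sq_nonneg _) (Finset.mem_univ j))

lemma eNorm_eq_norm {n : ℕ} (v : Fin n → ℝ) :
    eNorm v = ‖(EuclideanSpace.equiv (Fin n) ℝ).symm v‖ := by
  rw [EuclideanSpace.norm_eq]
  simp [eNorm, Real.norm_eq_abs, sq_abs]

lemma eNorm_sub_le {n : ℕ} (a b : Fin n → ℝ) :
    eNorm (fun j => a j - b j) ≤ eNorm a + eNorm b := by
  rw [eNorm_eq_norm, eNorm_eq_norm, eNorm_eq_norm]
  exact norm_sub_le ((EuclideanSpace.equiv (Fin n) ℝ).symm a) ((EuclideanSpace.equiv (Fin n) ℝ).symm b)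

lemma integral_exp_decay (kk t : ℝ) (hk : kk ≠ 0) :
    ∫ s in (0:ℝ)..t, Real.exp (-kk*(t-s)) = (1 - Real.exp (-kk*t))/kk := by
  have h : ∀ s : ℝ, Real.exp (-kk*(t-s)) = Real.exp (-kk*t) * Real.exp (kk*s) := by
    intro s; rw [← Real.exp_add]; ring_nf
  simp_rw [h]
  rw [intervalIntegral.integral_const_mul,
    intervalIntegral.integral_comp_mul_left (fun x => Real.exp x) hk, integral_exp]
  simp only [mul_zero, Real.exp_zero, smul_eq_mul]
  have : Real.exp (-(kk*t)) * Real.exp (kk*t) = 1 := by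
    rw [← Real.exp_add]; simp
  field_simp
  nlinarith [this]

lemma intInt_exp_mul (kk t C : ℝ) (hk : 0 < kk) (ht : 0 ≤ t) (g : ℝ → ℝ)
    (hg : Measurable g) (hC : ∀ s ∈ Set.Ioc (0:ℝ) t, |g s| ≤ C) :
    IntervalIntegrable (fun s => Real.exp (-kk*(t-s)) * g s) volume 0 t := by
  rw [intervalIntegrable_iff, Set.uIoc_of_le ht]
  apply Integrable.mono' (integrable_const C)
  · exact ((Real.measurable_exp.comp ((measurable_const.mul (measurable_const.sub measurable_id)))).mul hg).aestronglyMeasurable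
  · filter_upwards [ae_restrict_mem measurableSet_Ioc] with s hs
    rw [Real.norm_eq_abs, abs_mul, abs_of_pos (Real.exp_pos _)]
    calc Real.exp (-kk*(t-s)) * |g s| ≤ 1 * C := by
          apply mul_le_mul _ (hC s hs) (abs_nonneg _) zero_le_one
          rw [← Real.exp_zero]
          apply Real.exp_le_exp.2
          nlinarith [hs.2, hk]
      _ = C := one_mul C

lemma key_int_bound (kk C t : ℝ) (hk : 0 < kk) (hC : 0 ≤ C) (ht : 0 ≤ t)
    (g : ℝ → ℝ) (hg : Measurable g) (hgb : ∀ s ∈ Set.Ioc (0:ℝ) t, |g s| ≤ C) :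
    |∫ s in (0:ℝ)..t, Real.exp (-kk*(t-s)) * g s| ≤ C / kk := by
  have hbd : IntervalIntegrable (fun s => Real.exp (-kk*(t-s)) * C) volume 0 t := by
    apply intInt_exp_mul kk t C hk ht _ measurable_const (fun s _ => le_of_eq (abs_of_nonneg hC))
  have h1 : |∫ s in (0:ℝ)..t, Real.exp (-kk*(t-s)) * g s| ≤
      |∫ s in (0:ℝ)..t, Real.exp (-kk*(t-s)) * C| := by
    rw [← Real.norm_eq_abs]
    apply intervalIntegral.norm_integral_le_abs_of_norm_le _ hbd
    filter_upwards [ae_restrict_mem measurableSet_uIoc] with s hs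
    rw [Set.uIoc_of_le ht] at hs
    rw [Real.norm_eq_abs, abs_mul, abs_of_pos (Real.exp_pos _)]
    exact mul_le_mul_of_nonneg_left (hgb s hs) (Real.exp_pos _).le
  have h2 : ∫ s in (0:ℝ)..t, Real.exp (-kk*(t-s)) * C
      = (1 - Real.exp (-kk*t))/kk * C := by
    rw [intervalIntegral.integral_mul_const, integral_exp_decay kk t hk.ne']
  have hexp1 : Real.exp (-kk*t) ≤ 1 := Real.exp_le_one_iff.2 (by nlinarith)
  have hnn : 0 ≤ (1 - Real.exp (-kk*t))/kk * C :=
    mul_nonneg (div_nonneg (by linarith) hk.le) hC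
  rw [h2, abs_of_nonneg hnn] at h1
  refine h1.trans ?_
  rw [div_mul_eq_mul_div, div_le_div_iff_of_pos_right hk]
  nlinarith [Real.exp_pos (-kk*t)]

lemma geom_icc_sum (r : ℝ) (hr0 : 0 ≤ r) (hr1 : r < 1) (N : ℤ) :
    ∑ i ∈ Finset.Icc (0:ℤ) N, r ^ (N - i).toNat ≤ (1 - r)⁻¹ := by
  rcases lt_or_ge N 0 with hN | hN
  · rw [Finset.Icc_eq_empty (by omega)]
    simp only [Finset.sum_empty]
    rw [inv_nonneg]
    linarith
  · have : ∑ i ∈ Finset.Icc (0:ℤ) N, r ^ (N - i).toNat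
        = ∑ n ∈ Finset.range (N.toNat + 1), r ^ n := by
      apply Finset.sum_nbij' (i := fun i => (N - i).toNat) (j := fun n => N - n)
      · intro i hi; simp only [Finset.mem_Icc] at hi
        simp only [Finset.mem_range]; omega
      · intro n hn; simp only [Finset.mem_range] at hn
        simp only [Finset.mem_Icc]; omega
      · intro i hi; simp only [Finset.mem_Icc] at hi; omega
      · intro n hn; simp only [Finset.mem_range] at hn; omega
      · intro i hi; rfl
    rw [this, ← tsum_geometric_of_lt_one hr0 hr1]
    exact (summable_geometric_of_lt_one hr0 hr1).sum_le_tsum _ (fun n _ => pow_nonneg hr0 n)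

lemma sum_exp_geom (kk ω t : ℝ) (hk : 0 < kk) (hω : 0 < ω) (θ : ℤ → ℝ)
    (hθ : ∀ i : ℤ, (i:ℝ) * ω ≤ θ i ∧ θ i < ((i:ℝ)+1) * ω) :
    ∑ i ∈ Finset.Icc (0:ℤ) (⌈t/ω⌉ - 1),
        (if 0 ≤ θ i ∧ θ i < t then Real.exp (-kk*(t - θ i)) else 0)
      ≤ Real.exp (kk*ω) / (1 - Real.exp (-(kk*ω))) := by
  set N : ℤ := ⌈t/ω⌉ - 1 with hNdef
  set r : ℝ := Real.exp (-(kk*ω)) with hrdef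
  have hr0 : 0 < r := Real.exp_pos _
  have hr1 : r < 1 := Real.exp_lt_one_iff.2 (by nlinarith)
  have hNt : (N:ℝ) * ω < t := by
    have h1 : (N:ℝ) < t/ω := by
      have := Int.ceil_lt_add_one (t/ω)
      push_cast [hNdef]
      linarith
    calc (N:ℝ) * ω < t/ω * ω := by exact mul_lt_mul_of_pos_right h1 hω
      _ = t := by field_simp
  have hterm : ∀ i ∈ Finset.Icc (0:ℤ) N,
      (if 0 ≤ θ i ∧ θ i < t then Real.exp (-kk*(t - θ i)) else 0)
        ≤ Real.exp (kk*ω) * r ^ (N - i).toNat := by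
    intro i hi
    have hiN : i ≤ N := (Finset.mem_Icc.1 hi).2
    split
    · rename_i h
      have h1 : θ i < ((i:ℝ)+1)*ω := (hθ i).2
      have htn : ((N - i).toNat : ℝ) = (N:ℝ) - (i:ℝ) := by
        have h2 : ((N - i).toNat : ℤ) = N - i := Int.toNat_of_nonneg (by omega)
        have h3 : (((N - i).toNat : ℤ) : ℝ) = ((N:ℝ) - (i:ℝ)) := by rw [h2]; push_cast; ring
        exact_mod_cast h3
      rw [hrdef, ← Real.exp_nat_mul, ← Real.exp_add]
      apply Real.exp_le_exp.2
      rw [htn]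
      have hNi : (i:ℝ) ≤ (N:ℝ) := by exact_mod_cast hiN
      nlinarith
    · positivity
  calc ∑ i ∈ Finset.Icc (0:ℤ) N,
        (if 0 ≤ θ i ∧ θ i < t then Real.exp (-kk*(t - θ i)) else 0)
      ≤ ∑ i ∈ Finset.Icc (0:ℤ) N, Real.exp (kk*ω) * r ^ (N - i).toNat :=
        Finset.sum_le_sum hterm
    _ = Real.exp (kk*ω) * ∑ i ∈ Finset.Icc (0:ℤ) N, r ^ (N - i).toNat := by
        rw [Finset.mul_sum]
    _ ≤ Real.exp (kk*ω) * (1 - r)⁻¹ := by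
        exact mul_le_mul_of_nonneg_left (geom_icc_sum r hr0.le hr1 N) (Real.exp_pos _).le
    _ = Real.exp (kk*ω) / (1 - r) := by rw [div_eq_mul_inv]

/-- contraction estimate for `Π`, proof of Theorem 3: under the Lipschitz
conditions on `w₀, w_j, u₀`, for bounded measurable `ψ¹, ψ²` (with the same initial vector
`v⁰`) one has `|(Πψ¹)₀(t) − (Πψ²)₀(t)| ≤ (l₀√(2m)/k₀ + l_J·e^{k₀ω}/(1−e^{−k₀ω}))·sup_{s≥0}‖ψ¹(s)−ψ²(s)‖`
and `|(Πψ¹)_j(t) − (Πψ²)_j(t)| ≤ (2l_j/k_j)·sup_{s≥0}‖ψ¹(s)−ψ²(s)‖` for all `t ≥ 0`. -/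
theorem stmt13
    (m : ℕ) (hm : 1 ≤ m) (ω : ℝ) (hω : 0 < ω) (θ : ℤ → ℝ)
    (hθ : ∀ i : ℤ, (i : ℝ) * ω ≤ θ i ∧ θ i < ((i : ℝ) + 1) * ω)
    (k : Fin (m + 1) → ℝ) (hk : ∀ j, 0 < k j)
    (l : Fin (m + 1) → ℝ) (lJ : ℝ) (hl : ∀ j, 0 ≤ l j) (hlJ : 0 ≤ lJ)
    (w₀ : (Fin (m + 1) → ℝ) → ℝ) (w : Fin (m + 1) → ℝ → ℝ → ℝ) (u₀ : ℝ → ℝ)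
    (hw₀meas : Measurable w₀) (hwmeas : ∀ j, Measurable fun p : ℝ × ℝ => w j p.1 p.2)
    (hu₀meas : Measurable u₀)
    (hw₀lip : ∀ v v' : Fin (m + 1) → ℝ,
      |w₀ v - w₀ v'| ≤ l 0 * Real.sqrt (2 * m) * eNorm (fun j => v j - v' j))
    (hwlip : ∀ j, j ≠ 0 → ∀ a a' b b' : ℝ,
      |w j a b - w j a' b'| ≤ l j * (|a - a'| + |b - b'|))
    (hu₀lip : ∀ z z' : ℝ, |u₀ z - u₀ z'| ≤ lJ * |z - z'|)
    (v0 : Fin (m + 1) → ℝ)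
    (ψ1 ψ2 : ℝ → Fin (m + 1) → ℝ) (hψ1meas : Measurable ψ1) (hψ2meas : Measurable ψ2)
    (hψ1bd : ∃ B, ∀ t, eNorm (ψ1 t) ≤ B) (hψ2bd : ∃ B, ∀ t, eNorm (ψ2 t) ≤ B) :
    ∀ t : ℝ, 0 ≤ t →
      |PiOp m θ k w₀ w u₀ v0 ψ1 t 0 - PiOp m θ k w₀ w u₀ v0 ψ2 t 0| ≤
        (l 0 * Real.sqrt (2 * m) / k 0 + lJ * Real.exp (k 0 * ω) / (1 - Real.exp (-(k 0 * ω)))) *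
          (⨆ s : Set.Ici (0 : ℝ), eNorm (fun j => ψ1 s.1 j - ψ2 s.1 j)) ∧
      ∀ j, j ≠ 0 →
        |PiOp m θ k w₀ w u₀ v0 ψ1 t j - PiOp m θ k w₀ w u₀ v0 ψ2 t j| ≤
          2 * l j / k j * (⨆ s : Set.Ici (0 : ℝ), eNorm (fun j => ψ1 s.1 j - ψ2 s.1 j)) := by
  intro t ht
  obtain ⟨B1, hB1⟩ := hψ1bd
  obtain ⟨B2, hB2⟩ := hψ2bd
  set D := ⨆ s : Set.Ici (0 : ℝ), eNorm (fun j => ψ1 s.1 j - ψ2 s.1 j) with hDdef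
  have hbdd : BddAbove (Set.range fun s : Set.Ici (0:ℝ) =>
      eNorm (fun j => ψ1 s.1 j - ψ2 s.1 j)) := by
    refine ⟨B1 + B2, ?_⟩
    rintro x ⟨s, rfl⟩
    exact (eNorm_sub_le _ _).trans (add_le_add (hB1 _) (hB2 _))
  have hDs : ∀ s : ℝ, 0 ≤ s → eNorm (fun j => ψ1 s j - ψ2 s j) ≤ D := by
    intro s hs
    exact le_ciSup hbdd (⟨s, hs⟩ : Set.Ici (0:ℝ))
  have hD0 : 0 ≤ D := le_trans (eNorm_nonneg' _) (hDs 0 le_rfl)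
  have hψc1 : ∀ j, Measurable fun s => ψ1 s j := fun j => (measurable_pi_apply j).comp hψ1meas
  have hψc2 : ∀ j, Measurable fun s => ψ2 s j := fun j => (measurable_pi_apply j).comp hψ2meas
  have hL0 : 0 ≤ l 0 * Real.sqrt (2 * m) := mul_nonneg (hl 0) (Real.sqrt_nonneg _)
  constructor
  · -- coordinate 0
    have hwb1 : ∀ (ψ : ℝ → Fin (m+1) → ℝ) (B : ℝ), (∀ s, eNorm (ψ s) ≤ B) →
        ∀ s : ℝ, |w₀ (ψ s)| ≤ |w₀ 0| + l 0 * Real.sqrt (2*m) * B := by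
      intro ψ B hB s
      have h1 := hw₀lip (ψ s) 0
      have he : eNorm (fun j => ψ s j - (0 : Fin (m+1) → ℝ) j) = eNorm (ψ s) := by
        simp [eNorm]
      rw [he] at h1
      have hBnn : eNorm (ψ s) ≤ B := hB s
      calc |w₀ (ψ s)| = |(w₀ (ψ s) - w₀ 0) + w₀ 0| := by ring_nf
        _ ≤ |w₀ (ψ s) - w₀ 0| + |w₀ 0| := abs_add_le _ _
        _ ≤ l 0 * Real.sqrt (2*m) * B + |w₀ 0| := by
            have := mul_le_mul_of_nonneg_left hBnn hL0
            linarith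
        _ = |w₀ 0| + l 0 * Real.sqrt (2*m) * B := by ring
    have hI1 : IntervalIntegrable (fun s => Real.exp (-(k 0)*(t-s)) * w₀ (ψ1 s)) volume 0 t :=
      intInt_exp_mul (k 0) t _ (hk 0) ht _ (hw₀meas.comp hψ1meas)
        (fun s _ => hwb1 ψ1 B1 hB1 s)
    have hI2 : IntervalIntegrable (fun s => Real.exp (-(k 0)*(t-s)) * w₀ (ψ2 s)) volume 0 t :=
      intInt_exp_mul (k 0) t _ (hk 0) ht _ (hw₀meas.comp hψ2meas)
        (fun s _ => hwb1 ψ2 B2 hB2 s)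
    have hIdiff : |(∫ s in (0:ℝ)..t, Real.exp (-(k 0)*(t-s)) * w₀ (ψ1 s))
        - ∫ s in (0:ℝ)..t, Real.exp (-(k 0)*(t-s)) * w₀ (ψ2 s)|
        ≤ l 0 * Real.sqrt (2*m) * D / k 0 := by
      rw [← intervalIntegral.integral_sub hI1 hI2]
      simp_rw [← mul_sub]
      apply key_int_bound (k 0) _ t (hk 0) (mul_nonneg hL0 hD0) ht
      · exact (hw₀meas.comp hψ1meas).sub (hw₀meas.comp hψ2meas)
      · intro s hs
        calc |w₀ (ψ1 s) - w₀ (ψ2 s)|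
            ≤ l 0 * Real.sqrt (2*m) * eNorm (fun j => ψ1 s j - ψ2 s j) := hw₀lip _ _
          _ ≤ l 0 * Real.sqrt (2*m) * D :=
              mul_le_mul_of_nonneg_left (hDs s hs.1.le) hL0
    -- sum part
    set T1 : ℤ → ℝ := fun i => if 0 ≤ θ i ∧ θ i < t then
        Real.exp (-(k 0) * (t - θ i)) * u₀ (ψ1 (θ i) 0) else 0 with hT1def
    set T2 : ℤ → ℝ := fun i => if 0 ≤ θ i ∧ θ i < t then
        Real.exp (-(k 0) * (t - θ i)) * u₀ (ψ2 (θ i) 0) else 0 with hT2def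
    set sfin : Finset ℤ := Finset.Icc (0:ℤ) (⌈t/ω⌉ - 1) with hsfin
    have hmem : ∀ i : ℤ, (0 ≤ θ i ∧ θ i < t) → i ∈ sfin := by
      intro i hcond
      rw [hsfin, Finset.mem_Icc]
      constructor
      · by_contra hneg
        push_neg at hneg
        have h1 : ((i:ℝ)+1) ≤ 0 := by
          have : (i:ℤ) + 1 ≤ 0 := by omega
          exact_mod_cast this
        nlinarith [(hθ i).2, hcond.1]
      · have h2 : (i:ℝ) * ω < t := lt_of_le_of_lt (hθ i).1 hcond.2
        have h3 : (i:ℝ) < t/ω := (lt_div_iff₀ hω).2 h2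
        have h4 : (i:ℝ) < (⌈t/ω⌉ : ℝ) := lt_of_lt_of_le h3 (Int.le_ceil _)
        have h5 : i < ⌈t/ω⌉ := by exact_mod_cast h4
        omega
    have hsupp1 : ∀ i ∉ sfin, T1 i = 0 := by
      intro i hi
      rw [hT1def]
      simp only
      rw [if_neg (fun hc => hi (hmem i hc))]
    have hsupp2 : ∀ i ∉ sfin, T2 i = 0 := by
      intro i hi
      rw [hT2def]
      simp only
      rw [if_neg (fun hc => hi (hmem i hc))]
    have hsum1 : Summable T1 := summable_of_ne_finset_zero hsupp1
    have hsum2 : Summable T2 := summable_of_ne_finset_zero hsupp2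
    have hTsub : (∑' i, T1 i) - (∑' i, T2 i) = ∑ i ∈ sfin, (T1 i - T2 i) := by
      rw [← hsum1.tsum_sub hsum2]
      exact tsum_eq_sum (fun i hi => by rw [hsupp1 i hi, hsupp2 i hi, sub_zero])
    have hSdiff : |(∑' i, T1 i) - (∑' i, T2 i)|
        ≤ lJ * D * (Real.exp (k 0 * ω) / (1 - Real.exp (-(k 0 * ω)))) := by
      rw [hTsub]
      refine (Finset.abs_sum_le_sum_abs _ _).trans ?_
      have hterm : ∀ i ∈ sfin, |T1 i - T2 i|
          ≤ (lJ * D) * (if 0 ≤ θ i ∧ θ i < t then Real.exp (-(k 0)*(t - θ i)) else 0) := by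
        intro i _
        rw [hT1def, hT2def]
        simp only
        by_cases hc : 0 ≤ θ i ∧ θ i < t
        · rw [if_pos hc, if_pos hc, if_pos hc, ← mul_sub, abs_mul,
            abs_of_pos (Real.exp_pos _)]
          rw [mul_comm (lJ * D)]
          apply mul_le_mul_of_nonneg_left _ (Real.exp_pos _).le
          calc |u₀ (ψ1 (θ i) 0) - u₀ (ψ2 (θ i) 0)| ≤ lJ * |ψ1 (θ i) 0 - ψ2 (θ i) 0| :=
                hu₀lip _ _
            _ ≤ lJ * D := by
                apply mul_le_mul_of_nonneg_left _ hlJ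
                exact (abs_le_eNorm (fun j => ψ1 (θ i) j - ψ2 (θ i) j) 0).trans
                  (hDs (θ i) hc.1)
        · rw [if_neg hc, if_neg hc, if_neg hc]
          simp
      refine (Finset.sum_le_sum hterm).trans ?_
      rw [← Finset.mul_sum]
      apply mul_le_mul_of_nonneg_left _ (mul_nonneg hlJ hD0)
      exact sum_exp_geom (k 0) ω t (hk 0) hω θ hθ
    -- combine
    simp only [PiOp, if_true, eq_self_iff_true]
    rw [← hT1def, ← hT2def]
    have hrw : (Real.exp (-(k 0) * t) * v0 0
        + (∫ s in (0:ℝ)..t, Real.exp (-(k 0) * (t - s)) * w₀ (ψ1 s)) + ∑' i, T1 i)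
        - (Real.exp (-(k 0) * t) * v0 0
        + (∫ s in (0:ℝ)..t, Real.exp (-(k 0) * (t - s)) * w₀ (ψ2 s)) + ∑' i, T2 i)
        = ((∫ s in (0:ℝ)..t, Real.exp (-(k 0) * (t - s)) * w₀ (ψ1 s))
          - ∫ s in (0:ℝ)..t, Real.exp (-(k 0) * (t - s)) * w₀ (ψ2 s))
          + ((∑' i, T1 i) - ∑' i, T2 i) := by ring
    rw [hrw]
    calc |((∫ s in (0:ℝ)..t, Real.exp (-(k 0) * (t - s)) * w₀ (ψ1 s))
          - ∫ s in (0:ℝ)..t, Real.exp (-(k 0) * (t - s)) * w₀ (ψ2 s))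
          + ((∑' i, T1 i) - ∑' i, T2 i)|
        ≤ |(∫ s in (0:ℝ)..t, Real.exp (-(k 0) * (t - s)) * w₀ (ψ1 s))
          - ∫ s in (0:ℝ)..t, Real.exp (-(k 0) * (t - s)) * w₀ (ψ2 s)|
          + |(∑' i, T1 i) - ∑' i, T2 i| := abs_add_le _ _
      _ ≤ l 0 * Real.sqrt (2*m) * D / k 0
          + lJ * D * (Real.exp (k 0 * ω) / (1 - Real.exp (-(k 0 * ω)))) :=
          add_le_add hIdiff hSdiff
      _ = (l 0 * Real.sqrt (2 * m) / k 0
          + lJ * Real.exp (k 0 * ω) / (1 - Real.exp (-(k 0 * ω)))) * D := by ring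
  · -- coordinates j ≠ 0
    intro j hj
    have hlj := hl j
    have hmeas1 : Measurable fun s => w j (ψ1 s 0) (ψ1 s j) :=
      (hwmeas j).comp ((hψc1 0).prodMk (hψc1 j))
    have hmeas2 : Measurable fun s => w j (ψ2 s 0) (ψ2 s j) :=
      (hwmeas j).comp ((hψc2 0).prodMk (hψc2 j))
    have hwb : ∀ (ψ : ℝ → Fin (m+1) → ℝ) (B : ℝ), (∀ s, eNorm (ψ s) ≤ B) →
        ∀ s : ℝ, |w j (ψ s 0) (ψ s j)| ≤ |w j 0 0| + l j * (B + B) := by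
      intro ψ B hB s
      have h1 := hwlip j hj (ψ s 0) 0 (ψ s j) 0
      simp only [sub_zero] at h1
      have h2 : |ψ s 0| ≤ B := (abs_le_eNorm (ψ s) 0).trans (hB s)
      have h3 : |ψ s j| ≤ B := (abs_le_eNorm (ψ s) j).trans (hB s)
      calc |w j (ψ s 0) (ψ s j)| = |(w j (ψ s 0) (ψ s j) - w j 0 0) + w j 0 0| := by ring_nf
        _ ≤ |w j (ψ s 0) (ψ s j) - w j 0 0| + |w j 0 0| := abs_add_le _ _
        _ ≤ l j * (|ψ s 0| + |ψ s j|) + |w j 0 0| := by linarith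
        _ ≤ |w j 0 0| + l j * (B + B) := by nlinarith
    have hI1 : IntervalIntegrable (fun s => Real.exp (-(k j)*(t-s)) * w j (ψ1 s 0) (ψ1 s j))
        volume 0 t :=
      intInt_exp_mul (k j) t _ (hk j) ht _ hmeas1 (fun s _ => hwb ψ1 B1 hB1 s)
    have hI2 : IntervalIntegrable (fun s => Real.exp (-(k j)*(t-s)) * w j (ψ2 s 0) (ψ2 s j))
        volume 0 t :=
      intInt_exp_mul (k j) t _ (hk j) ht _ hmeas2 (fun s _ => hwb ψ2 B2 hB2 s)
    simp only [PiOp, if_neg hj]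
    have hrw : (Real.exp (-(k j) * t) * v0 j
        + ∫ s in (0:ℝ)..t, Real.exp (-(k j) * (t - s)) * w j (ψ1 s 0) (ψ1 s j))
        - (Real.exp (-(k j) * t) * v0 j
        + ∫ s in (0:ℝ)..t, Real.exp (-(k j) * (t - s)) * w j (ψ2 s 0) (ψ2 s j))
        = (∫ s in (0:ℝ)..t, Real.exp (-(k j) * (t - s)) * w j (ψ1 s 0) (ψ1 s j))
          - ∫ s in (0:ℝ)..t, Real.exp (-(k j) * (t - s)) * w j (ψ2 s 0) (ψ2 s j) := by ring
    rw [hrw, ← intervalIntegral.integral_sub hI1 hI2]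
    simp_rw [← mul_sub]
    have hb := key_int_bound (k j) (2 * l j * D) t (hk j)
      (by positivity) ht
      (fun s => w j (ψ1 s 0) (ψ1 s j) - w j (ψ2 s 0) (ψ2 s j))
      (hmeas1.sub hmeas2) ?_
    · refine hb.trans (le_of_eq ?_)
      ring
    · intro s hs
      have h1 := hwlip j hj (ψ1 s 0) (ψ2 s 0) (ψ1 s j) (ψ2 s j)
      have h2 : |ψ1 s 0 - ψ2 s 0| ≤ D :=
        (abs_le_eNorm (fun i => ψ1 s i - ψ2 s i) 0).trans (hDs s hs.1.le)
      have h3 : |ψ1 s j - ψ2 s j| ≤ D :=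
        (abs_le_eNorm (fun i => ψ1 s i - ψ2 s i) j).trans (hDs s hs.1.le)
      nlinarith [abs_nonneg (ψ1 s 0 - ψ2 s 0), abs_nonneg (ψ1 s j - ψ2 s j)]
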